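/- For all integers d ≥ 1 and n ≥ 1, the rational function ({(d+1)n-d}/{n}) · {2(n-1):d choose n-1:d}_L is a polynomial in s and t all of whose coefficients are nonnegative integers. (Formally: there exists p ∈ Z[s,t] with all coefficients nonnegative such that {(d+1)n-d} · {2(n-1):d}! · ({n-1:d}!)^{-2} = p·{n}, i.e. {n}·{n-1:d}!·{n-1:d}!·p = {(d+1)n-d}·{2(n-1):d}!.) -/
import Mathlib
set_option synthInstance.maxHeartbeats 1000000
set_option maxHeartbeats 1000000


open MvPolynomial Finset

noncomputable section

/-- Polynomial ring ℤ[s,t] with s = X 0, t = X 1. -/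
abbrev P2 : Type := MvPolynomial (Fin 2) ℤ

def ps : P2 := X 0
def pt : P2 := X 1

/-- The Lucas sequence of polynomials: {0}=0, {1}=1, {n}=s{n-1}+t{n-2}. -/
def lucas : ℕ → P2
  | 0 => 0
  | 1 => 1
  | (n+2) => ps * lucas (n+1) + pt * lucas n

/-- The Lucastorial {n}! = {1}{2}⋯{n}. -/
def lucasFact (n : ℕ) : P2 := ∏ i ∈ Finset.range n, lucas (i+1)

/-- The d-divisible Lucastorial {n:d}! = {d}{2d}⋯{nd}. -/
def lucasFactD (d n : ℕ) : P2 := ∏ i ∈ Finset.range n, lucas (d*(i+1))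

/-- A polynomial lies in ℕ[s,t]: all coefficients are nonnegative. -/
def Nonneg (p : P2) : Prop := ∀ m, 0 ≤ p.coeff m

/-- The fraction field ℤ(s,t). -/
abbrev K : Type := FractionRing P2

def φ : P2 →+* K := algebraMap P2 K

def L (n : ℕ) : K := φ (lucas n)

def LFact (n : ℕ) : K := φ (lucasFact n)

def LFactD (d n : ℕ) : K := φ (lucasFactD d n)

/-- The Lucasnomial {n choose k}, as an element of the fraction field. -/
def lnom (n k : ℕ) : K := LFact n / (LFact k * LFact (n-k))

/-- The d-divisible Lucasnomial {n:d choose k:d}, as an element of the fraction field. -/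
def lnomD (d n k : ℕ) : K := LFactD d n / (LFactD d k * LFactD d (n-k))

/-- The Lucas-Catalan number C_{n} = (1/{n+1}) {2n choose n}. -/
def catL (n : ℕ) : K := lnom (2*n) n / L (n+1)

/-- The Lucas-Fuss-Catalan number C_{n,k} = (1/{kn+1}) {(k+1)n choose n}. -/
def fussCatL (n k : ℕ) : K := lnom ((k+1)*n) n / L (k*n+1)

def lq (k n : ℕ) : P2 :=
  match k with
  | 0 => 0
  | k+1 => lucas (k*n+1) + pt * lucas (n-1) * lq k n

def lb (d : ℕ) : ℕ → ℕ → P2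
  | _, 0 => 1
  | 0, _+1 => 0
  | (n+1), (k+1) => lucas (d*(n-k)+1) * lb d n k + pt * lucas (d*(k+1)-1) * lb d n (k+1)

lemma lb_zero (d n : ℕ) : lb d n 0 = 1 := by cases n <;> rfl
lemma lb_zero_succ (d k : ℕ) : lb d 0 (k+1) = 0 := rfl
lemma lb_succ_succ (d n k : ℕ) : lb d (n+1) (k+1) =
    lucas (d*(n-k)+1) * lb d n k + pt * lucas (d*(k+1)-1) * lb d n (k+1) := rfl

lemma lucasFactD_succ (d n : ℕ) : lucasFactD d (n+1) = lucasFactD d n * lucas (d*(n+1)) :=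
  Finset.prod_range_succ _ _
lemma lucasFactD_zero (d : ℕ) : lucasFactD d 0 = 1 := Finset.prod_range_zero _

lemma lb_gt (d : ℕ) : ∀ n k, n < k → lb d n k = 0 := by
  intro n
  induction n with
  | zero => intro k hk; obtain ⟨j, rfl⟩ : ∃ j, k = j+1 := ⟨k-1, by omega⟩; rfl
  | succ n ih =>
    intro k hk
    obtain ⟨j, rfl⟩ : ∃ j, k = j+1 := ⟨k-1, by omega⟩
    rw [lb_succ_succ, ih j (by omega), ih (j+1) (by omega)]
    ring

lemma lb_diag (d : ℕ) : ∀ n, lb d n n = 1 := by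
  intro n
  induction n with
  | zero => rfl
  | succ n ih =>
    rw [lb_succ_succ, ih, lb_gt d n (n+1) (by omega), Nat.sub_self]
    simp [lucas]

lemma add_formula : ∀ a b, lucas (a+b+1) = lucas (a+1) * lucas (b+1) + pt * lucas a * lucas b := by
  intro a
  induction a using Nat.twoStepInduction with
  | zero => intro b; simp [lucas]
  | one =>
    intro b
    rw [show 1+b+1 = b+2 from by omega]
    rw [show lucas 2 = ps * lucas 1 + pt * lucas 0 from rfl]
    rw [show lucas (b+2) = ps * lucas (b+1) + pt * lucas b from rfl]
    simp [lucas]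
  | more n ih ih2 =>
    intro b
    have e1 := ih b
    have e2 := ih2 b
    rw [show n+1+b+1 = (n+b+1)+1 from by omega] at e2
    rw [show n+2+b+1 = (n+b+1)+2 from by omega]
    rw [show lucas ((n+b+1)+2) = ps * lucas ((n+b+1)+1) + pt * lucas (n+b+1) from rfl]
    rw [show lucas (n+2+1) = ps * lucas (n+2) + pt * lucas (n+1) from rfl]
    rw [show lucas (n+2) = ps * lucas (n+1) + pt * lucas n from rfl]
    rw [show lucas (n+1+1) = ps * lucas (n+1) + pt * lucas n from rfl] at e2
    linear_combination ps * e2 + pt * e1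

lemma lq_mul (k n : ℕ) (hn : 1 ≤ n) : lucas (k*n) = lucas n * lq k n := by
  induction k with
  | zero => simp [lq, lucas]
  | succ k ih =>
    have hmul : (k+1)*n = k*n + n := by ring
    rw [show (k+1)*n = k*n + (n-1) + 1 from by omega]
    rw [add_formula, show (n-1)+1 = n from by omega, ih]
    rw [show lq (k+1) n = lucas (k*n+1) + pt * lucas (n-1) * lq k n from rfl]
    ring

lemma lb_eq (d : ℕ) (hd : 1 ≤ d) : ∀ n k, k ≤ n →
    lucasFactD d n = lb d n k * (lucasFactD d k * lucasFactD d (n - k)) := by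
  intro n
  induction n with
  | zero =>
    intro k hk
    interval_cases k
    simp [lucasFactD_zero, lb_zero]
  | succ n ih =>
    intro k hk
    rcases k with _ | k
    · simp [lb_zero, lucasFactD_zero]
    rcases Nat.lt_or_ge k n with hlt | hge
    · -- k+1 ≤ n
      set j := n - (k+1) with hj
      have hnk1 : n + 1 - (k+1) = j + 1 := by omega
      have hnk : n - k = j + 1 := by omega
      have hdk1 : 1 ≤ d*(k+1) := by calc 1 = 1*1 := by ring
                                      _ ≤ d*(k+1) := Nat.mul_le_mul hd (by omega)
      have hC : lucas (d*(n+1)) = lucas (d*(j+1)+1) * lucas (d*(k+1)) +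
          pt * lucas (d*(j+1)) * lucas (d*(k+1)-1) := by
        have h := add_formula (d*(j+1)) (d*(k+1)-1)
        rw [show d*(k+1)-1+1 = d*(k+1) from by omega] at h
        rw [show d*(j+1) + (d*(k+1)-1) + 1 = d*(n+1) from by
          have h2 : d*(j+1) + d*(k+1) = d*(n+1) := by
            rw [← Nat.mul_add]; congr 1; omega
          omega] at h
        exact h
      have hA := ih k (by omega)
      rw [hnk] at hA
      have hB := ih (k+1) (by omega)
      rw [← hj] at hB
      have hE : lucasFactD d (k+1) = lucasFactD d k * lucas (d*(k+1)) := lucasFactD_succ d k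
      have hH : lucasFactD d (j+1) = lucasFactD d j * lucas (d*(j+1)) := lucasFactD_succ d j
      have hFs : lucasFactD d (n+1) = lucasFactD d n * lucas (d*(n+1)) := lucasFactD_succ d n
      rw [hnk1, hFs, lb_succ_succ, hnk]
      linear_combination (lucasFactD d n) * hC
        + (lucas (d*(j+1)+1) * lucas (d*(k+1))) * hA
        + (pt * lucas (d*(k+1)-1) * lucas (d*(j+1))) * hB
        - (lucas (d*(j+1)+1) * lb d n k * lucasFactD d (j+1)) * hE
        - (pt * lucas (d*(k+1)-1) * lb d n (k+1) * lucasFactD d (k+1)) * hH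
    · -- k = n
      have hkn : k = n := by omega
      subst hkn
      rw [lb_diag, Nat.sub_self, lucasFactD_zero]
      ring


lemma nn_zero : Nonneg 0 := fun m => by simp
lemma nn_one : Nonneg 1 := fun m => by
  classical
  rw [MvPolynomial.coeff_one]
  split <;> norm_num
lemma nn_add {p q : P2} (hp : Nonneg p) (hq : Nonneg q) : Nonneg (p+q) := fun m => by
  rw [MvPolynomial.coeff_add]; exact add_nonneg (hp m) (hq m)
lemma nn_mul {p q : P2} (hp : Nonneg p) (hq : Nonneg q) : Nonneg (p*q) := fun m => by
  classical
  rw [MvPolynomial.coeff_mul]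
  exact Finset.sum_nonneg fun x _ => mul_nonneg (hp _) (hq _)
lemma nn_X (i : Fin 2) : Nonneg (X i : P2) := fun m => by
  classical
  rw [MvPolynomial.coeff_X']
  split <;> norm_num
lemma nn_lucas : ∀ n, Nonneg (lucas n) := by
  intro n
  induction n using Nat.twoStepInduction with
  | zero => exact nn_zero
  | one => exact nn_one
  | more n ih ih2 =>
    rw [show lucas (n+2) = ps * lucas (n+1) + pt * lucas n from rfl]
    exact nn_add (nn_mul (nn_X 0) ih2) (nn_mul (nn_X 1) ih)
lemma nn_pt : Nonneg pt := nn_X 1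

lemma nn_lq (k n : ℕ) : Nonneg (lq k n) := by
  induction k with
  | zero => exact nn_zero
  | succ k ih =>
    rw [show lq (k+1) n = lucas (k*n+1) + pt * lucas (n-1) * lq k n from rfl]
    exact nn_add (nn_lucas _) (nn_mul (nn_mul nn_pt (nn_lucas _)) ih)

lemma nn_lb (d : ℕ) : ∀ n k, Nonneg (lb d n k) := by
  intro n
  induction n with
  | zero =>
    intro k
    rcases k with _ | k
    · rw [lb_zero]; exact nn_one
    · rw [lb_zero_succ]; exact nn_zero
  | succ n ih =>
    intro k
    rcases k with _ | k
    · rw [lb_zero]; exact nn_one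
    · rw [lb_succ_succ]
      exact nn_add (nn_mul (nn_lucas _) (ih k)) (nn_mul (nn_mul nn_pt (nn_lucas _)) (ih (k+1)))

lemma lucas_pos : ∀ n, 1 ≤ MvPolynomial.eval (fun _ => (1:ℤ)) (lucas (n+1)) := by
  intro n
  induction n using Nat.twoStepInduction with
  | zero => simp [lucas]
  | one => simp [lucas, ps, pt]
  | more n ih ih2 =>
    rw [show lucas (n+2+1) = ps * lucas (n+2) + pt * lucas (n+1) from rfl]
    simp only [map_add, map_mul]
    have h1 : MvPolynomial.eval (fun _ => (1:ℤ)) ps = 1 := by simp [ps]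
    have h2 : MvPolynomial.eval (fun _ => (1:ℤ)) pt = 1 := by simp [pt]
    rw [h1, h2]
    nlinarith [ih, ih2]

lemma lucas_ne_zero (n : ℕ) (h : 1 ≤ n) : lucas n ≠ 0 := by
  obtain ⟨k, rfl⟩ : ∃ k, n = k+1 := ⟨n-1, by omega⟩
  intro h0
  have := lucas_pos k
  rw [h0] at this
  simp at this

lemma lucasFactD_ne_zero (d n : ℕ) (hd : 1 ≤ d) : lucasFactD d n ≠ 0 := by
  unfold lucasFactD
  rw [Finset.prod_ne_zero_iff]
  intro i _
  exact lucas_ne_zero _ (by calc 1 = 1*1 := by ring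
                                _ ≤ d*(i+1) := Nat.mul_le_mul hd (by omega))


lemma phi_ne_zero {x : P2} (hx : x ≠ 0) : φ x ≠ 0 := fun h =>
  hx ((IsFractionRing.injective P2 K) (h.trans (map_zero _).symm))


/-- for d ≥ 1, n ≥ 1, the rational function
({(d+1)n-d}/{n}) {2(n-1):d choose n-1:d} lies in ℕ[s,t]. -/
theorem dDivisible_catalanD (d n : ℕ) (hd : 1 ≤ d) (hn : 1 ≤ n) :
    ∃ p : P2, Nonneg p ∧
      L ((d+1)*n - d) / L n * lnomD d (2*(n-1)) (n-1) = φ p := by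
  rcases n with _ | n
  · omega
  rcases n with _ | m
  · -- n = 1
    refine ⟨1, nn_one, ?_⟩
    rw [show (d+1)*1 - d = 1 from by omega]
    simp only [lnomD, L, LFactD]
    norm_num
    rw [lucasFactD_zero]
    rw [show lucas 1 = (1:P2) from rfl]
    simp
  · -- n = m+2
    refine ⟨lucas (d*(m+1)+1) * lb d (2*(m+1)) (m+1)
          + pt * lucas (m+1) * lq d (m+2) * lb d (2*(m+1)) m, ?_, ?_⟩
    · exact nn_add (nn_mul (nn_lucas _) (nn_lb d _ _))
        (nn_mul (nn_mul (nn_mul nn_pt (nn_lucas _)) (nn_lq _ _)) (nn_lb d _ _))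
    have h1 := lb_eq d hd (2*(m+1)) (m+1) (by omega)
    rw [show 2*(m+1)-(m+1) = m+1 from by omega] at h1
    have h2 := lb_eq d hd (2*(m+1)) m (by omega)
    rw [show 2*(m+1)-m = m+2 from by omega] at h2
    have h3 : lucasFactD d (m+2) = lucasFactD d (m+1) * lucas (d*(m+2)) := lucasFactD_succ d (m+1)
    have h4 : lucasFactD d (m+1) = lucasFactD d m * lucas (d*(m+1)) := lucasFactD_succ d m
    have h5 : lucas (d*(m+2)) = lucas (m+2) * lq d (m+2) := lq_mul d (m+2) (by omega)
    have hadd : lucas (d*(m+1) + (m+1) + 1)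
        = lucas (d*(m+1)+1) * lucas (m+2) + pt * lucas (d*(m+1)) * lucas (m+1) :=
      add_formula (d*(m+1)) (m+1)
    have key : lucas (d*(m+1)) * lucasFactD d (2*(m+1))
        = lq d (m+2) * lb d (2*(m+1)) m * lucas (m+2) * lucasFactD d (m+1) * lucasFactD d (m+1) := by
      rw [h2, h3, h4, h5]; ring
    have main : lucas (d*(m+1)+(m+1)+1) * lucasFactD d (2*(m+1))
        = (lucas (d*(m+1)+1) * lb d (2*(m+1)) (m+1)
          + pt * lucas (m+1) * lq d (m+2) * lb d (2*(m+1)) m)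
          * (lucas (m+2) * (lucasFactD d (m+1) * lucasFactD d (m+1))) := by
      rw [hadd]
      linear_combination (lucas (d*(m+1)+1) * lucas (m+2)) * h1 + (pt * lucas (m+1)) * key
    have e1 : (d+1)*(m+2) - d = d*(m+1)+(m+1)+1 := by
      have h : (d+1)*(m+2) = d*(m+1) + d + (m+2) := by ring
      omega
    rw [e1, show m+2-1 = m+1 from rfl]
    simp only [lnomD, L, LFactD]
    rw [show 2*(m+1)-(m+1) = m+1 from by omega]
    rw [div_mul_div_comm]
    rw [div_eq_iff (by
      apply mul_ne_zero (phi_ne_zero (lucas_ne_zero _ (by omega)))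
      exact mul_ne_zero (phi_ne_zero (lucasFactD_ne_zero d _ hd))
        (phi_ne_zero (lucasFactD_ne_zero d _ hd)))]
    rw [← map_mul, ← map_mul, ← map_mul, ← map_mul]
    exact congrArg φ main
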